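/- Let k be even and n₁ ≥ n₂ ≥ ... ≥ n_k be positive reals, and r a positive natural number. Then n₁^(1/r) - n₂^(1/r) + n₃^(1/r) - ... + n_{k-1}^(1/r) - n_k^(1/r) ≤ (n₁ - n₂ + n₃ - ... + n_{k-1} - n_k)^(1/r). -/

import Mathlib

open Finset Real

private lemma key_anti {p u : ℝ} (hp0 : 0 < p) (hp1 : p ≤ 1) (hu : 0 ≤ u) :
    AntitoneOn (fun x : ℝ => (x + u) ^ p - x ^ p) (Set.Ici 0) := by
  apply antitoneOn_of_deriv_nonpos (convex_Ici 0)
  · exact (((continuous_add_right u).continuousOn).rpow_const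
      (fun x _ => Or.inr hp0.le)).sub (continuousOn_id.rpow_const (fun x _ => Or.inr hp0.le))
  · intro x hx
    rw [interior_Ici] at hx
    have hx0 : (0:ℝ) < x := hx
    have h1 : HasDerivAt (fun x : ℝ => (x + u) ^ p) (p * (x + u) ^ (p - 1) * 1) x :=
      (Real.hasDerivAt_rpow_const (Or.inl (by positivity))).comp x
        ((hasDerivAt_id x).add_const u)
    have h2 : HasDerivAt (fun x : ℝ => x ^ p) (p * x ^ (p - 1)) x :=
      Real.hasDerivAt_rpow_const (Or.inl hx0.ne')
    exact (h1.sub h2).differentiableAt.differentiableWithinAt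
  · intro x hx
    rw [interior_Ici] at hx
    have hx0 : (0:ℝ) < x := hx
    have h1 : HasDerivAt (fun x : ℝ => (x + u) ^ p) (p * (x + u) ^ (p - 1) * 1) x :=
      (Real.hasDerivAt_rpow_const (Or.inl (by positivity))).comp x
        ((hasDerivAt_id x).add_const u)
    have h2 : HasDerivAt (fun x : ℝ => x ^ p) (p * x ^ (p - 1)) x :=
      Real.hasDerivAt_rpow_const (Or.inl hx0.ne')
    have h3 : HasDerivAt (fun x : ℝ => (x + u) ^ p - x ^ p)
        (p * (x + u) ^ (p - 1) * 1 - p * x ^ (p - 1)) x := h1.sub h2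
    rw [h3.deriv]
    have hle : (x + u) ^ (p - 1) ≤ x ^ (p - 1) :=
      Real.rpow_le_rpow_of_nonpos hx0 (by linarith) (by linarith)
    nlinarith [hp0.le]

private lemma key_ineq {p a b T : ℝ} (hp0 : 0 < p) (hp1 : p ≤ 1) (hT : 0 ≤ T)
    (hTb : T ≤ b) (hba : b ≤ a) : a ^ p - b ^ p + T ^ p ≤ (a - b + T) ^ p := by
  have h := key_anti (u := a - b) hp0 hp1 (by linarith) (Set.mem_Ici.2 hT)
    (Set.mem_Ici.2 (le_trans hT hTb)) hTb
  simp only [show b + (a - b) = a by ring, show T + (a - b) = a - b + T by ring] at h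
  linarith

private lemma main_lemma (p : ℝ) (hp0 : 0 < p) (hp1 : p ≤ 1) :
    ∀ j (n : ℕ → ℝ), (∀ i < 2*j, 0 < n i) → (∀ i i', i ≤ i' → i' < 2*j → n i' ≤ n i) →
      (0 ≤ ∑ i ∈ range (2*j), (-1:ℝ)^i * n i) ∧
      (∀ b, 0 ≤ b → (∀ i < 2*j, n i ≤ b) → ∑ i ∈ range (2*j), (-1:ℝ)^i * n i ≤ b) ∧
      (∑ i ∈ range (2*j), (-1:ℝ)^i * (n i)^p ≤ (∑ i ∈ range (2*j), (-1:ℝ)^i * n i)^p) := by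
  intro j
  induction j with
  | zero =>
    intro n _ _
    simp [Real.zero_rpow hp0.ne']
  | succ j ih =>
    intro n hpos hmono
    have e1 : ∀ F : ℕ → ℝ, ∑ i ∈ range (2*(j+1)), F i
        = ∑ i ∈ range (2*j), F (i+2) + F 1 + F 0 := by
      intro F
      rw [show 2*(j+1) = 2*j+1+1 by ring, Finset.sum_range_succ', Finset.sum_range_succ']
    have hshift : ∀ m : ℕ → ℝ, ∑ i ∈ range (2*j), (-1:ℝ)^(i+2) * m (i+2)
        = ∑ i ∈ range (2*j), (-1:ℝ)^i * m (i+2) := by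
      intro m
      refine Finset.sum_congr rfl fun i _ => ?_
      rw [pow_add]; norm_num
    obtain ⟨hT0, hTle, hTp⟩ := ih (fun i => n (i+2))
      (fun i hi => hpos (i+2) (by omega))
      (fun i i' h hi => hmono (i+2) (i'+2) (by omega) (by omega))
    set T := ∑ i ∈ range (2*j), (-1:ℝ)^i * n (i+2) with hTdef
    have hn1 : 0 < n 1 := hpos 1 (by omega)
    have hn0 : 0 < n 0 := hpos 0 (by omega)
    have h01 : n 1 ≤ n 0 := hmono 0 1 (by omega) (by omega)
    have hTn1 : T ≤ n 1 := hTle (n 1) hn1.le (fun i hi => hmono 1 (i+2) (by omega) (by omega))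
    have hsum : ∑ i ∈ range (2*(j+1)), (-1:ℝ)^i * n i = n 0 - n 1 + T := by
      rw [e1 (fun i => (-1:ℝ)^i * n i)]
      simp only [hshift n] at *
      norm_num; ring
    have hsump : ∑ i ∈ range (2*(j+1)), (-1:ℝ)^i * (n i)^p
        = (∑ i ∈ range (2*j), (-1:ℝ)^i * (n (i+2))^p) - (n 1)^p + (n 0)^p := by
      rw [e1 (fun i => (-1:ℝ)^i * (n i)^p)]
      rw [hshift (fun i => (n i)^p)]
      norm_num; ring
    refine ⟨?_, ?_, ?_⟩
    · rw [hsum]; linarith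
    · intro b hb hbd
      rw [hsum]
      have := hbd 0 (by omega)
      linarith
    · rw [hsum, hsump]
      have hkey : (n 0)^p - (n 1)^p + T^p ≤ (n 0 - n 1 + T)^p :=
        key_ineq hp0 hp1 hT0 hTn1 h01
      linarith

theorem stmt_1 (k : ℕ) (hk : Even k) (n : ℕ → ℝ) (r : ℕ) (hr : 1 ≤ r)
    (hpos : ∀ i < k, 0 < n i)
    (hmono : ∀ i j, i ≤ j → j < k → n j ≤ n i) :
    ∑ i ∈ Finset.range k, (-1 : ℝ) ^ i * (n i) ^ (1 / (r : ℝ)) ≤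
      (∑ i ∈ Finset.range k, (-1 : ℝ) ^ i * n i) ^ (1 / (r : ℝ)) := by
  obtain ⟨j, rfl⟩ := hk
  have h2j : j + j = 2 * j := by ring
  have hr' : (1:ℝ) ≤ (r:ℝ) := by exact_mod_cast hr
  have hp0 : 0 < 1 / (r:ℝ) := by positivity
  have hp1 : 1 / (r:ℝ) ≤ 1 := by
    rw [div_le_one (by linarith)]; exact hr'
  rw [h2j] at hpos hmono ⊢
  exact (main_lemma (1/(r:ℝ)) hp0 hp1 j n hpos hmono).2.2
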